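/- Let g : V → ℂ^{p−k} be a holomorphic map on a complex manifold V and let X ⊂ V be p-pseudoconcave. Then for every x ∈ ℂ^{p−k}, the fiber intersection g⁻¹(x) ∩ X is k-pseudoconcave in V. -/

import Mathlib

open MeasureTheory Metric Set Filter Bornology Topology

noncomputable section

/-- `ℂⁿ` with its Euclidean structure. -/
abbrev CSp (n : ℕ) := EuclideanSpace ℂ (Fin n)

instance (n : ℕ) : MeasureSpace (CSp n) :=
  { volume := (volume : Measure (∀ _ : Fin n, ℂ)).map (WithLp.toLp 2) }
instance (n : ℕ) : BorelSpace (CSp n) := PiLp.borelSpace 2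
/-- The union of the unbounded connected components of the complement of `K` in `ℂᵖ`. -/
def unbddCompl {p : ℕ} (K : Set (CSp p)) : Set (CSp p) :=
  ⋃₀ {C | C ⊆ Kᶜ ∧ IsConnected C ∧ ¬Bornology.IsBounded C}

/-- `U` is relatively open in `V`. -/
def RelOpen {n : ℕ} (V U : Set (CSp n)) : Prop := ∃ O, IsOpen O ∧ U = V ∩ O

/-- `f` is holomorphic along `V` on `W ⊆ V`: near each point of `W` it extends to a
holomorphic map of a full neighbourhood in `ℂⁿ` (for `V` open this is just holomorphy on `W`;
for `V` a submanifold this is the usual notion of holomorphy on `V`). -/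
def HolomorphicAlong {n q : ℕ} (V W : Set (CSp n)) (f : CSp n → CSp q) : Prop :=
  ∀ a ∈ W, ∃ O : Set (CSp n), IsOpen O ∧ a ∈ O ∧
    ∃ g : CSp n → CSp q, DifferentiableOn ℂ g O ∧ ∀ x ∈ O ∩ V, g x = f x

/-- `X` is a `p`-pseudoconcave subset of (the complex manifold) `V`: `X` is closed in `V` and
for every relatively open `U ⊂⊂ V` and every holomorphic map `f` from a neighbourhood of the
closure of `U` (in `V`) into `ℂᵖ`, `f(X ∩ U)` avoids the unbounded component of
`ℂᵖ \ f(X ∩ ∂U)`, where `∂U = closure U \ U` is the boundary of `U` in `V`. -/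
def IsPseudoconcave {n : ℕ} (p : ℕ) (V X : Set (CSp n)) : Prop :=
  X ⊆ V ∧ (V ∩ closure X ⊆ X) ∧
  ∀ U : Set (CSp n), RelOpen V U → IsCompact (closure U) → closure U ⊆ V →
    ∀ W : Set (CSp n), RelOpen V W → closure U ⊆ W →
      ∀ f : CSp n → CSp p, HolomorphicAlong V W f →
        f '' (X ∩ U) ⊆ (unbddCompl (f '' (X ∩ (closure U \ U))))ᶜ

/-- Auxiliary: the isometric embedding `ℂᵏ → ℂᵖ` by zero-padding. -/
noncomputable def embIso (k p : ℕ) (hkp : k ≤ p) : CSp k →ₗᵢ[ℂ] CSp p where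
  toLinearMap :=
  { toFun := fun c => WithLp.toLp 2 (fun i : Fin p => if h : (i : ℕ) < k then c ⟨i, h⟩ else 0)
    map_add' := fun a b => by
      ext i
      by_cases h : (i : ℕ) < k <;> simp [h, PiLp.add_apply]
    map_smul' := fun m a => by
      ext i
      by_cases h : (i : ℕ) < k <;> simp [h, PiLp.smul_apply] }
  norm_map' := fun c => by
    simp only [LinearMap.coe_mk, AddHom.coe_mk]
    rw [EuclideanSpace.norm_eq, EuclideanSpace.norm_eq]
    congr 1
    symm
    calc ∑ j : Fin k, ‖c j‖ ^ 2
        = ∑ i ∈ Finset.univ.map (Fin.castLEEmb hkp),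
            ‖(if h : (i : ℕ) < k then c ⟨i, h⟩ else 0)‖ ^ 2 := by
          rw [Finset.sum_map]
          refine Finset.sum_congr rfl fun j _ => ?_
          simp [Fin.castLEEmb, Fin.castLE, j.isLt]
      _ = ∑ i : Fin p, ‖(if h : (i : ℕ) < k then c ⟨i, h⟩ else 0)‖ ^ 2 := by
          refine Finset.sum_subset (Finset.subset_univ _) fun i _ hi => ?_
          have : ¬ (i : ℕ) < k := by
            intro h
            exact hi (by simp [Fin.castLEEmb, Fin.castLE]; exact ⟨⟨i, h⟩, by simp⟩)
          simp [this]

/-- Auxiliary: combine `f : ℂⁿ → ℂᵏ` and `g - x : ℂⁿ → ℂ^{p-k}` into a map `ℂⁿ → ℂᵖ`. -/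
noncomputable def combineMap {n : ℕ} (p k : ℕ) (hkp : k ≤ p) (f : CSp n → CSp k)
    (g : CSp n → CSp (p - k)) (x : CSp (p - k)) : CSp n → CSp p :=
  fun z => WithLp.toLp 2 (fun i : Fin p =>
    if h : (i : ℕ) < k then f z ⟨i, h⟩
    else g z ⟨(i : ℕ) - k, by have := i.isLt; omega⟩ - x ⟨(i : ℕ) - k, by have := i.isLt; omega⟩)

lemma combineMap_eq_emb {n : ℕ} (p k : ℕ) (hkp : k ≤ p) (f : CSp n → CSp k)
    (g : CSp n → CSp (p - k)) (x : CSp (p - k)) {z : CSp n} (hz : g z = x) :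
    combineMap p k hkp f g x z = embIso k p hkp (f z) := by
  ext i
  by_cases h : (i : ℕ) < k
  · simp [combineMap, embIso, h]
  · simp [combineMap, embIso, h, hz]

lemma eq_of_combineMap_eq_emb {n : ℕ} (p k : ℕ) (hkp : k ≤ p) (f : CSp n → CSp k)
    (g : CSp n → CSp (p - k)) (x : CSp (p - k)) {z : CSp n} {c : CSp k}
    (hz : combineMap p k hkp f g x z = embIso k p hkp c) : g z = x ∧ f z = c := by
  constructor
  · ext j
    have hj : k + (j : ℕ) < p := by have := j.isLt; omega
    have := congrArg (fun v : CSp p => v ⟨k + (j : ℕ), hj⟩) hz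
    have hlt : ¬ (k + (j : ℕ) < k) := by omega
    simp only [combineMap, embIso, LinearIsometry.coe_mk, LinearMap.coe_mk, AddHom.coe_mk,
      dif_neg hlt] at this
    have hidx : (⟨k + (j : ℕ) - k, by omega⟩ : Fin (p - k)) = j := by
      ext; simp
    rw [hidx] at this
    have := sub_eq_zero.mp this
    exact this
  · ext i
    have hi : (i : ℕ) < p := lt_of_lt_of_le i.isLt hkp
    have := congrArg (fun v : CSp p => v ⟨(i : ℕ), hi⟩) hz
    have hlt : ((i : ℕ) : ℕ) < k := i.isLt
    simp only [combineMap, embIso, LinearIsometry.coe_mk, LinearMap.coe_mk, AddHom.coe_mk,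
      dif_pos hlt] at this
    simpa using this

/-- If `g : V → ℂ^{p−k}` is holomorphic on the complex manifold `V` (here an open
subset of `ℂⁿ`) and `X ⊆ V` is `p`-pseudoconcave, then for every `x ∈ ℂ^{p−k}` the fiber
intersection `g⁻¹(x) ∩ X` is `k`-pseudoconcave in `V` (`1 ≤ k ≤ p`). -/
theorem pseudoconcave_fiber {n : ℕ} (p k : ℕ) (hk : 1 ≤ k) (hkp : k ≤ p)
    (V X : Set (CSp n)) (hV : IsOpen V) (g : CSp n → CSp (p - k))
    (hg : DifferentiableOn ℂ g V) (hX : IsPseudoconcave p V X) :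
    ∀ x : CSp (p - k), IsPseudoconcave k V (g ⁻¹' {x} ∩ X) := by
  intro x
  set Y : Set (CSp n) := g ⁻¹' {x} ∩ X with hY
  refine ⟨fun y hy => hX.1 hy.2, ?_, ?_⟩
  · -- relative closedness
    rintro y ⟨hyV, hycl⟩
    have hyX : y ∈ X := hX.2.1 ⟨hyV, closure_mono inter_subset_right hycl⟩
    have hgc : ContinuousWithinAt g Y y :=
      ((hg.differentiableAt (hV.mem_nhds hyV)).continuousAt).continuousWithinAt
    have : g y ∈ closure (g '' Y) := hgc.mem_closure_image hycl
    have hsub : g '' Y ⊆ {x} := by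
      rintro _ ⟨w, hw, rfl⟩
      exact hw.1
    have : g y ∈ closure ({x} : Set (CSp (p - k))) :=
      closure_mono hsub this
    rw [closure_singleton] at this
    exact ⟨this, hyX⟩
  · intro U hU hUc hUV W hW hUW f hf
    set F := combineMap p k hkp f g x with hF
    -- F is holomorphic along V on W
    have hFhol : HolomorphicAlong V W F := by
      intro a ha
      obtain ⟨O₁, hO₁, haO₁, f₀, hf₀, hf₀eq⟩ := hf a ha
      have haV : a ∈ V := by
        obtain ⟨O, hO, rfl⟩ := hW
        exact ha.1
      refine ⟨O₁ ∩ V, hO₁.inter hV, ⟨haO₁, haV⟩, combineMap p k hkp f₀ g x, ?_, ?_⟩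
      · rw [show (DifferentiableOn ℂ (combineMap p k hkp f₀ g x) (O₁ ∩ V)) ↔ _ from
          differentiableOn_euclidean]
        intro i
        by_cases h : (i : ℕ) < k
        · simp only [combineMap, dif_pos h]
          exact differentiableOn_euclidean.1 (hf₀.mono inter_subset_left) _
        · simp only [combineMap, dif_neg h]
          exact ((differentiableOn_euclidean.1 (hg.mono inter_subset_right)) _).sub
            (differentiableOn_const _)
      · intro z hz
        have hfz : f₀ z = f z := hf₀eq z ⟨hz.1.1, hz.2⟩
        ext i
        by_cases h : (i : ℕ) < k
        · simp only [hF, combineMap, dif_pos h, hfz]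
        · simp only [hF, combineMap, dif_neg h]
    have hmain := hX.2.2 U hU hUc hUV W hW hUW F hFhol
    -- now the containment
    rintro _ ⟨y, ⟨⟨hgy, hyX⟩, hyU⟩, rfl⟩ hc
    obtain ⟨C, ⟨hCsub, hCconn, hCunb⟩, hfyC⟩ := hc
    have hgyx : g y = x := hgy
    set ι := embIso k p hkp with hι
    have hFy : F y = ι (f y) := combineMap_eq_emb p k hkp f g x hgyx
    -- the padded component
    have hsub' : (ι '' C) ⊆ (F '' (X ∩ (closure U \ U)))ᶜ := by
      rintro _ ⟨c', hc'C, rfl⟩ ⟨w, ⟨hwX, hwB⟩, hFw⟩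
      obtain ⟨hgw, hfw⟩ := eq_of_combineMap_eq_emb p k hkp f g x hFw
      exact hCsub hc'C ⟨w, ⟨⟨hgw, hwX⟩, hwB⟩, hfw⟩
    have hconn' : IsConnected (ι '' C) := hCconn.image ι ι.continuous.continuousOn
    have hunb' : ¬ IsBounded (ι '' C) := by
      intro hb
      exact hCunb ((ι.antilipschitz.isBounded_preimage hb).subset (subset_preimage_image _ _))
    have : F y ∈ unbddCompl (F '' (X ∩ (closure U \ U))) := by
      rw [hFy]
      exact ⟨ι '' C, ⟨hsub', hconn', hunb'⟩, ⟨f y, hfyC, rfl⟩⟩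
    exact hmain ⟨y, ⟨hyX, hyU⟩, rfl⟩ this
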